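/- Under internal validity of the observational study and overlap, for each a ∈ {0,1} the instance-wise observational potential-outcome signal ψ₁ᵃ is conditionally unbiased for the potential-outcome mean in the observational population: for every x with P(X=x) > 0, E[ψ₁ᵃ | X=x] = E[Y_a | X=x, S=1]. -/

import Mathlib

open MeasureTheory

/-- Conditional expectation of `Z` given the event `E`: `E[Z | E] = (∫_E Z dP) / P(E)`. -/
noncomputable def eCond {Ω : Type*} [MeasurableSpace Ω] (P : Measure Ω) (E : Set Ω)
    (Z : Ω → ℝ) : ℝ :=
  (∫ ω in E, Z ω ∂P) / (P E).toReal

/-- Conditional probability of `E'` given the event `E`: `P(E' | E) = P(E' ∩ E) / P(E)`. -/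
noncomputable def pCond {Ω : Type*} [MeasurableSpace Ω] (P : Measure Ω) (E' E : Set Ω) : ℝ :=
  (P (E' ∩ E)).toReal / (P E).toReal

/-- The response surface `μ_a(x) = E[Y | X=x, A=a, S=1]`. -/
noncomputable def mu {Ω 𝒳 : Type*} [MeasurableSpace Ω] (P : Measure Ω)
    (X : Ω → 𝒳) (S A : Ω → Fin 2) (Y : Ω → ℝ) (a : Fin 2) (x : 𝒳) : ℝ :=
  eCond P {ω | X ω = x ∧ A ω = a ∧ S ω = 1} Y

/-- The observational potential-outcome signal
`ψ₁ᵃ = (1 / P(S=0 | X)) · [ 1{S=0}·μ_a(X) +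
1{S=1}·(P(S=0 | X)/P(S=1 | X))·1{A=a}(Y − μ_a(X))/P(A=a | X, S=1) ]`. -/
noncomputable def psi1a {Ω 𝒳 : Type*} [MeasurableSpace Ω] (P : Measure Ω)
    (X : Ω → 𝒳) (S A : Ω → Fin 2) (Y : Ω → ℝ) (a : Fin 2) (ω : Ω) : ℝ :=
  (1 / pCond P {ω' | S ω' = 0} {ω' | X ω' = X ω}) *
    ((if S ω = 0 then (1 : ℝ) else 0) * mu P X S A Y a (X ω) +
      (if S ω = 1 then (1 : ℝ) else 0) *
        (pCond P {ω' | S ω' = 0} {ω' | X ω' = X ω} /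
          pCond P {ω' | S ω' = 1} {ω' | X ω' = X ω}) *
        ((if A ω = a then (1 : ℝ) else 0) * (Y ω - mu P X S A Y a (X ω)) /
          pCond P {ω' | A ω' = a} {ω' | X ω' = X ω ∧ S ω' = 1}))

/-- Under internal validity of the observational study and overlap, for
each `a ∈ {0,1}` the instance-wise observational potential-outcome signal `ψ₁ᵃ` is
conditionally unbiased for the potential-outcome mean in the observational population. -/
theorem obs_potential_outcome_signal_unbiased
    {Ω 𝒳 : Type*} [MeasurableSpace Ω] [MeasurableSpace 𝒳]
    [Countable 𝒳] [MeasurableSingletonClass 𝒳]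
    (P : Measure Ω) [IsProbabilityMeasure P]
    (X : Ω → 𝒳) (S A : Ω → Fin 2) (Yp : Fin 2 → Ω → ℝ) (Y : Ω → ℝ)
    (hX : Measurable X) (hS : Measurable S) (hA : Measurable A)
    (hYp : ∀ a, Integrable (Yp a) P) (hY : Integrable Y P)
    -- internal validity of the observational study:
    (consistency : ∀ a : Fin 2, ∀ᵐ ω ∂P, S ω = 1 → A ω = a → Y ω = Yp a ω)
    (ignorability : ∀ a a' : Fin 2, ∀ x : 𝒳,
      0 < P {ω | X ω = x ∧ S ω = 1 ∧ A ω = a'} →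
      eCond P {ω | X ω = x ∧ S ω = 1 ∧ A ω = a'} (Yp a)
        = eCond P {ω | X ω = x ∧ S ω = 1} (Yp a))
    (posTreatment : ∀ a : Fin 2, ∀ x : 𝒳, 0 < P {ω | X ω = x ∧ S ω = 1} →
      0 < pCond P {ω | A ω = a} {ω | X ω = x ∧ S ω = 1})
    -- overlap:
    (overlap : ∀ x : 𝒳, 0 < P {ω | X ω = x} →
      0 < P {ω | X ω = x ∧ S ω = 0} ∧ 0 < P {ω | X ω = x ∧ S ω = 1}) :
    ∀ a : Fin 2, ∀ x : 𝒳, 0 < P {ω | X ω = x} →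
      eCond P {ω | X ω = x} (psi1a P X S A Y a)
        = eCond P {ω | X ω = x ∧ S ω = 1} (Yp a) := by
  intro a x hx
  -- measurable sets
  have hE : MeasurableSet {ω | X ω = x} := hX (measurableSet_singleton x)
  have hS0 : MeasurableSet {ω | S ω = 0} := hS (measurableSet_singleton 0)
  have hS1 : MeasurableSet {ω | S ω = 1} := hS (measurableSet_singleton 1)
  have hAa : MeasurableSet {ω | A ω = a} := hA (measurableSet_singleton a)
  set E : Set Ω := {ω | X ω = x} with hEdef
  set F0 : Set Ω := {ω | X ω = x ∧ S ω = 0} with hF0def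
  set F1 : Set Ω := {ω | X ω = x ∧ S ω = 1} with hF1def
  set D : Set Ω := {ω | X ω = x ∧ A ω = a ∧ S ω = 1} with hDdef
  have hD : MeasurableSet D := hE.inter (hAa.inter hS1)
  obtain ⟨h0, h1⟩ := overlap x hx
  -- positivity of the real numbers involved
  have hPE : (0:ℝ) < (P E).toReal := ENNReal.toReal_pos hx.ne' (measure_ne_top P _)
  have hP0 : (0:ℝ) < (P F0).toReal := ENNReal.toReal_pos h0.ne' (measure_ne_top P _)
  have hP1 : (0:ℝ) < (P F1).toReal := ENNReal.toReal_pos h1.ne' (measure_ne_top P _)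
  have hsetF0 : {ω | S ω = 0} ∩ E = F0 := by
    ext ω; simp only [Set.mem_inter_iff, Set.mem_setOf_eq, hEdef, hF0def]; tauto
  have hsetF1 : {ω | S ω = 1} ∩ E = F1 := by
    ext ω; simp only [Set.mem_inter_iff, Set.mem_setOf_eq, hEdef, hF1def]; tauto
  have hsetD : {ω | A ω = a} ∩ F1 = D := by
    ext ω; simp only [Set.mem_inter_iff, Set.mem_setOf_eq, hF1def, hDdef]; tauto
  set p0 : ℝ := pCond P {ω' | S ω' = 0} {ω' | X ω' = x} with hp0def
  set p1 : ℝ := pCond P {ω' | S ω' = 1} {ω' | X ω' = x} with hp1def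
  set e : ℝ := pCond P {ω' | A ω' = a} {ω' | X ω' = x ∧ S ω' = 1} with hedef
  have hp0eq : p0 = (P F0).toReal / (P E).toReal := by rw [hp0def, pCond, hsetF0]
  have hp1eq : p1 = (P F1).toReal / (P E).toReal := by rw [hp1def, pCond, hsetF1]
  have heeq : e = (P D).toReal / (P F1).toReal := by rw [hedef, pCond, hsetD]
  have hp0pos : 0 < p0 := by rw [hp0eq]; positivity
  have hp1pos : 0 < p1 := by rw [hp1eq]; positivity
  have hepos : 0 < e := posTreatment a x h1
  have hPD : (0:ℝ) < (P D).toReal := by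
    have := hepos
    rw [heeq] at this
    exact (div_pos_iff.mp this).resolve_right (by rintro ⟨_, h⟩; linarith) |>.1
  have hPDmeas : 0 < P D := by
    refine pos_iff_ne_zero.mpr fun h => ?_
    rw [h] at hPD; simp at hPD
  set m : ℝ := mu P X S A Y a x with hmdef
  have hmY : ∫ ω in D, Y ω ∂P = m * (P D).toReal := by
    rw [hmdef, mu, eCond]
    exact (div_mul_cancel₀ _ hPD.ne').symm
  -- consistency: on D, Y = Yp a a.e.
  have hcons : ∫ ω in D, Y ω ∂P = ∫ ω in D, Yp a ω ∂P := by
    refine setIntegral_congr_ae hD ?_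
    filter_upwards [consistency a] with ω h hmem
    exact h hmem.2.2 hmem.2.1
  -- ignorability step
  have hignset : {ω | X ω = x ∧ S ω = 1 ∧ A ω = a} = D := by
    ext ω; simp only [Set.mem_setOf_eq, hDdef]; tauto
  have hign := ignorability a a x (by rw [hignset]; exact hPDmeas)
  rw [hignset] at hign
  -- the value of psi1a on E
  set c1 : ℝ := m / p0 with hc1def
  set c2 : ℝ := (1 / p0) * (p0 / p1) / e with hc2def
  set g : Ω → ℝ := fun ω =>
      c1 * ({ω | S ω = 0}.indicator (fun _ => (1:ℝ)) ω)
        + c2 * (({ω | S ω = 1} ∩ {ω | A ω = a}).indicator (fun ω => Y ω - m) ω) with hgdef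
  have hpsi : Set.EqOn (psi1a P X S A Y a) g E := by
    intro ω hω
    have hXω : X ω = x := hω
    have hSor : S ω = 0 ∨ S ω = 1 := by omega
    simp only [hgdef, psi1a, hXω, ← hp0def, ← hp1def, ← hedef, ← hmdef,
      Set.indicator_apply, Set.mem_inter_iff, Set.mem_setOf_eq]
    rcases hSor with h | h
    · have h' : S ω ≠ 1 := by omega
      simp only [h, if_pos rfl, if_neg (by omega : S ω ≠ 1), h']
      rw [hc1def]; simp only [if_true, zero_ne_one, if_false, false_and, mul_zero, add_zero, zero_mul, one_mul]; field_simp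
    · have h' : S ω ≠ 0 := by omega
      by_cases hAA : A ω = a
      · simp only [h, hAA, if_pos rfl, if_neg h', and_self, if_true]
        rw [hc2def]; simp only [one_ne_zero, if_false, zero_mul, mul_zero, zero_add, add_zero]; field_simp
      · simp [h, h', hAA]
  -- integrability
  have hint1 : Integrable (fun ω => c1 * ({ω | S ω = 0}.indicator (fun _ => (1:ℝ)) ω)) P :=
    ((integrable_const (1:ℝ)).indicator hS0).const_mul c1
  have hint2 : Integrable
      (fun ω => c2 * (({ω | S ω = 1} ∩ {ω | A ω = a}).indicator (fun ω => Y ω - m) ω)) P :=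
    ((hY.sub (integrable_const m)).indicator (hS1.inter hAa)).const_mul c2
  -- compute the integral of g over E
  have hintg : ∫ ω in E, g ω ∂P = m * (P E).toReal := by
    rw [hgdef]
    rw [integral_add hint1.integrableOn hint2.integrableOn,
      integral_const_mul, integral_const_mul,
      setIntegral_indicator hS0, setIntegral_indicator (hS1.inter hAa)]
    have he1 : E ∩ {ω | S ω = 0} = F0 := by rw [Set.inter_comm]; exact hsetF0
    have he2 : E ∩ ({ω | S ω = 1} ∩ {ω | A ω = a}) = D := by
      ext ω; simp only [Set.mem_inter_iff, Set.mem_setOf_eq, hEdef, hDdef]; tauto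
    rw [he1, he2, setIntegral_const,
      integral_sub hY.integrableOn (integrable_const m), setIntegral_const, hmY]
    simp only [smul_eq_mul, mul_one, measureReal_def]
    rw [hc1def, hp0eq]
    field_simp
    ring
  -- put everything together
  have hLHS : eCond P E (psi1a P X S A Y a) = m := by
    rw [eCond, setIntegral_congr_fun hE hpsi, hintg,
      mul_div_assoc, div_self hPE.ne', mul_one]
  rw [hLHS, ← hign, hmdef, mu, eCond, eCond, hcons]
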